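/- Let $C_*$ be a Banach chain complex over $\mathbb{R}$ and let $k \in \mathbb{N}$. Then $C_*$ satisfies the uniform boundary condition in degree $k$ if and only if the image of the boundary operator $\partial_{k+1} \colon C_{k+1} \to C_k$ is a closed subspace of $C_k$. -/

import Mathlib

/-- **Matsumoto–Morita: UBC and closed boundaries (Banach case).**
Let `C_*` be a Banach chain complex over `ℝ` (a chain complex of real Banach spaces with
bounded boundary operators) and `k ∈ ℕ`. Then `C_*` satisfies the uniform boundary condition
in degree `k` (there is `K > 0` such that every `b ∈ im ∂_{k+1}` admits `c ∈ C_{k+1}` with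
`∂_{k+1} c = b` and `‖c‖ ≤ K * ‖b‖`) if and only if the image of
`∂_{k+1} : C_{k+1} → C_k` is a closed subspace of `C_k`. -/
theorem stmt2 (C : ℕ → Type*) [∀ n, NormedAddCommGroup (C n)] [∀ n, NormedSpace ℝ (C n)]
    [∀ n, CompleteSpace (C n)]
    (d : ∀ n, C (n + 1) →L[ℝ] C n)
    (hdd : ∀ n x, d n (d (n + 1) x) = 0) (k : ℕ) :
    (∃ K > 0, ∀ b ∈ Set.range (d k), ∃ c, d k c = b ∧ ‖c‖ ≤ K * ‖b‖) ↔
      IsClosed (Set.range (d k)) := by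
  constructor
  · rintro ⟨K, hK, h⟩
    -- view `d k` as a `NormedAddGroupHom`
    let f : NormedAddGroupHom (C (k + 1)) (C k) :=
      { toFun := d k
        map_add' := map_add (d k)
        bound' := ⟨((d k).bound.choose), fun v => (d k).bound.choose_spec.2 v⟩ }
    let G : AddSubgroup (C k) :=
      { carrier := Set.range (d k)
        add_mem' := by rintro _ _ ⟨x, rfl⟩ ⟨y, rfl⟩; exact ⟨x + y, map_add _ _ _⟩
        zero_mem' := ⟨0, map_zero _⟩
        neg_mem' := by rintro _ ⟨x, rfl⟩; exact ⟨-x, map_neg _ _⟩ }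
    have hsurj : f.SurjectiveOnWith G K := fun b hb => h b hb
    have hclos := controlled_closure_of_complete hK one_pos hsurj
    have : (G.topologicalClosure : Set (C k)) ⊆ Set.range (d k) := by
      intro b hb
      obtain ⟨c, hc, -⟩ := hclos b hb
      exact ⟨c, hc⟩
    have hsub : closure (Set.range (d k)) ⊆ Set.range (d k) := by
      intro b hb
      exact this hb
    exact isClosed_of_closure_subset hsub
  · intro hcl
    set p : Submodule ℝ (C k) := LinearMap.range ((d k : C (k + 1) →ₗ[ℝ] C k)) with hp
    have hpc : IsClosed (p : Set (C k)) := by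
      simpa [hp, LinearMap.coe_range] using hcl
    haveI : CompleteSpace p := hpc.completeSpace_coe
    let f : C (k + 1) →L[ℝ] p :=
      (d k).codRestrict p (fun x => LinearMap.mem_range_self _ x)
    have hsurj : Function.Surjective f := by
      rintro ⟨b, x, rfl⟩
      exact ⟨x, rfl⟩
    obtain ⟨K, hK, hKf⟩ := f.exists_preimage_norm_le hsurj
    refine ⟨K, hK, fun b hb => ?_⟩
    obtain ⟨c, hc, hnorm⟩ := hKf ⟨b, hb⟩
    refine ⟨c, ?_, by simpa using hnorm⟩
    simpa [f, Subtype.ext_iff] using hc
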